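/- arXiv:2206.00472 — 4 statements merged into one kernel-verified Lean document; each statement's English description precedes it below -/
import Mathlib

section
/- Let G be a linearly ordered abelian group, let β_1,…,β_m be elements of G, let λ be a limit ordinal, let (γ_s)_{s<λ} be a strictly increasing family of elements of G indexed by the ordinals s < λ, and let t_1,…,t_m be integers such that β_i ≠ β_j whenever i ≠ j and t_i = t_j. Then there exists an ordinal ν < λ such that for every ordinal s with ν < s < λ the m elements β_i + t_i·γ_s (1 ≤ i ≤ m) are pairwise distinct. Moreover, if the integers t_1,…,t_m are pairwise distinct, then there exist an index r with 1 ≤ r ≤ m and an ordinal ν < λ such that β_i + t_i·γ_s > β_r + t_r·γ_s for all i ≠ r and all ordinals s with ν < s < λ. -/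
/-- Ostrowski's lemma (Lemma 1 of the paper): given elements `β i` of a linearly ordered
abelian group, integers `t i` (distinct whenever the corresponding `β`'s coincide), and a
strictly increasing family `γ` indexed by the ordinals below a limit ordinal `lam`,
eventually the elements `β i + t i • γ s` are pairwise distinct; moreover if the `t i` are
pairwise distinct, eventually one index realizes the strict minimum. -/
theorem ostrowski_lemma {G : Type*} [AddCommGroup G] [LinearOrder G] [IsOrderedAddMonoid G]
    (m : ℕ) (β : Fin m → G) (t : Fin m → ℤ)
    (lam : Ordinal) (hlam : Order.IsSuccLimit lam)
    (γ : Ordinal → G)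
    (hγ : ∀ s s' : Ordinal, s < s' → s' < lam → γ s < γ s')
    (hβ : ∀ i j : Fin m, i ≠ j → t i = t j → β i ≠ β j) :
    (∃ ν < lam, ∀ s : Ordinal, ν < s → s < lam →
        ∀ i j : Fin m, i ≠ j → β i + t i • γ s ≠ β j + t j • γ s) ∧
      (0 < m → Function.Injective t →
        ∃ r : Fin m, ∃ ν < lam, ∀ s : Ordinal, ν < s → s < lam →
          ∀ i : Fin m, i ≠ r → β r + t r • γ s < β i + t i • γ s) := by
  -- the key pairwise comparison lemma
  have key : ∀ (a b : G) (u v : ℤ), u < v →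
      ∃ ν < lam, (∀ s : Ordinal, ν < s → s < lam → a + u • γ s < b + v • γ s) ∨
        (∀ s : Ordinal, ν < s → s < lam → b + v • γ s < a + u • γ s) := by
    intro a b u v huv
    by_cases h : ∃ s₀, s₀ < lam ∧ a + u • γ s₀ ≤ b + v • γ s₀
    · obtain ⟨s₀, hs₀, hle⟩ := h
      refine ⟨s₀, hs₀, Or.inl ?_⟩
      intro s hs hsl
      have hd : (0 : G) < γ s - γ s₀ := sub_pos.2 (hγ _ _ hs hsl)
      have hsm : u • (γ s - γ s₀) < v • (γ s - γ s₀) := zsmul_lt_zsmul_left hd huv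
      have e1 : a + u • γ s = (a + u • γ s₀) + u • (γ s - γ s₀) := by
        rw [zsmul_sub]; abel
      have e2 : b + v • γ s = (b + v • γ s₀) + v • (γ s - γ s₀) := by
        rw [zsmul_sub]; abel
      rw [e1, e2]
      calc (a + u • γ s₀) + u • (γ s - γ s₀)
          ≤ (b + v • γ s₀) + u • (γ s - γ s₀) := by gcongr
        _ < (b + v • γ s₀) + v • (γ s - γ s₀) := by gcongr
    · push_neg at h
      exact ⟨0, hlam.pos, Or.inr fun s _ hsl => h s hsl⟩
  have keyne : ∀ (a b : G) (u v : ℤ), u ≠ v →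
      ∃ ν < lam, (∀ s : Ordinal, ν < s → s < lam → a + u • γ s < b + v • γ s) ∨
        (∀ s : Ordinal, ν < s → s < lam → b + v • γ s < a + u • γ s) := by
    intro a b u v huv
    rcases huv.lt_or_gt with h | h
    · exact key a b u v h
    · obtain ⟨ν, hν, hor⟩ := key b a v u h
      exact ⟨ν, hν, hor.symm⟩
  constructor
  · -- part 1
    have Q : ∀ p : Fin m × Fin m, ∃ ν < lam, ∀ s : Ordinal, ν < s → s < lam →
        p.1 ≠ p.2 → β p.1 + t p.1 • γ s ≠ β p.2 + t p.2 • γ s := by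
      rintro ⟨i, j⟩
      by_cases hij : i = j
      · exact ⟨0, hlam.pos, fun s _ _ h => absurd hij h⟩
      by_cases ht : t i = t j
      · refine ⟨0, hlam.pos, fun s _ _ _ hne => ?_⟩
        rw [ht] at hne
        exact hβ i j hij ht (by simpa using add_right_cancel hne)
      · obtain ⟨ν, hν, hor⟩ := keyne (β i) (β j) (t i) (t j) ht
        refine ⟨ν, hν, fun s hs hsl _ => ?_⟩
        rcases hor with h | h
        · exact (h s hs hsl).ne
        · exact (h s hs hsl).ne'
    choose ν hν hQ using Q
    refine ⟨Finset.univ.sup ν, ?_, ?_⟩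
    · exact Finset.sup_lt_iff hlam.pos |>.2 fun p _ => hν p
    · intro s hs hsl i j hij
      exact hQ (i, j) s (lt_of_le_of_lt (Finset.le_sup (Finset.mem_univ (i, j))) hs) hsl hij
  · -- part 2
    intro hm ht
    have Q2 : ∀ p : Fin m × Fin m, ∃ ν < lam, p.1 ≠ p.2 →
        (∀ s : Ordinal, ν < s → s < lam →
          β p.1 + t p.1 • γ s < β p.2 + t p.2 • γ s) ∨
        (∀ s : Ordinal, ν < s → s < lam →
          β p.2 + t p.2 • γ s < β p.1 + t p.1 • γ s) := by
      rintro ⟨i, j⟩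
      by_cases hij : i = j
      · exact ⟨0, hlam.pos, fun h => absurd hij h⟩
      · obtain ⟨ν, hν, hor⟩ := keyne (β i) (β j) (t i) (t j) (fun h => hij (ht h))
        exact ⟨ν, hν, fun _ => hor⟩
    choose ν hν hQ using Q2
    set N := Finset.univ.sup ν with hN
    have hNlt : N < lam := Finset.sup_lt_iff hlam.pos |>.2 fun p _ => hν p
    have hs₀lt : Order.succ N < lam := hlam.succ_lt hNlt
    set s₀ := Order.succ N with hs₀
    obtain ⟨r, -, hr⟩ := Finset.exists_min_image Finset.univ
      (fun i => β i + t i • γ s₀) ⟨⟨0, hm⟩, Finset.mem_univ _⟩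
    refine ⟨r, N, hNlt, fun s hs hsl i hir => ?_⟩
    have hle : ν (r, i) ≤ N := Finset.le_sup (Finset.mem_univ (r, i))
    rcases hQ (r, i) (Ne.symm hir) with h | h
    · exact h s (lt_of_le_of_lt hle hs) hsl
    · exfalso
      have h1 : β i + t i • γ s₀ < β r + t r • γ s₀ :=
        h s₀ (lt_of_le_of_lt hle (Order.lt_succ N)) hs₀lt
      exact absurd (hr i (Finset.mem_univ i)) (not_le.2 h1)
end

section
/- Let G be a linearly ordered abelian group, let β_0, β_1, β_{0,1} be elements of G, let λ_0, λ_1 be limit ordinals, and let (γ_{0,j₀})_{j₀<λ_0} and (γ_{1,j₁})_{j₁<λ_1} be two strictly increasing families of elements ≥ 0 of G. Set P_{0,j₀} = β_0 + γ_{0,j₀}, P_{1,j₁} = β_1 + γ_{1,j₁}, and P_{0,1,j₀,j₁} = β_{0,1} + γ_{0,j₀} + γ_{1,j₁}. Then there exist ordinals ρ_0 < λ_0 and ρ_1 < λ_1, a set A of ordinals < λ_0, and a map σ : A → {ordinals < λ_1} such that the three elements P_{0,j₀}, P_{1,j₁}, P_{0,1,j₀,j₁} are pairwise distinct for all ordinals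 j₀, j₁ with ρ_0 < j₀ < λ_0 and ρ_1 < j₁ < λ_1 satisfying: if j₀ ∈ A then j₁ ≠ σ(j₀). In particular, for any ordinals ν_0 < λ_0 and ν_1 < λ_1 there exist ordinals j₀, j₁ with ν_0 < j₀ < λ_0 and ν_1 < j₁ < λ_1 such that P_{0,j₀}, P_{1,j₁}, P_{0,1,j₀,j₁} are pairwise distinct. -/
/-- Lemma 3 of the paper: for two strictly increasing nonnegative families `γ₀, γ₁`
indexed by ordinals below limit ordinals `lam₀, lam₁`, the three elements
`β₀ + γ₀ j₀`, `β₁ + γ₁ j₁`, `β₀₁ + γ₀ j₀ + γ₁ j₁` are pairwise distinct for all large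
`j₀, j₁` avoiding the graph of a partial map `σ : A → {ordinals < lam₁}`; in particular
beyond any `ν₀, ν₁` some pair `j₀, j₁` makes them pairwise distinct. -/
theorem two_sequences_lemma {G : Type*} [AddCommGroup G] [LinearOrder G] [IsOrderedAddMonoid G]
    (β₀ β₁ β₀₁ : G) (lam₀ lam₁ : Ordinal) (h₀ : Order.IsSuccLimit lam₀) (h₁ : Order.IsSuccLimit lam₁)
    (γ₀ γ₁ : Ordinal → G)
    (hm₀ : ∀ j j' : Ordinal, j < j' → j' < lam₀ → γ₀ j < γ₀ j')
    (hm₁ : ∀ j j' : Ordinal, j < j' → j' < lam₁ → γ₁ j < γ₁ j')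
    (hn₀ : ∀ j < lam₀, (0 : G) ≤ γ₀ j) (hn₁ : ∀ j < lam₁, (0 : G) ≤ γ₁ j) :
    (∃ ρ₀ < lam₀, ∃ ρ₁ < lam₁, ∃ (A : Set Ordinal) (σ : Ordinal → Ordinal),
      (∀ j ∈ A, j < lam₀) ∧ (∀ j ∈ A, σ j < lam₁) ∧
      ∀ j₀, ρ₀ < j₀ → j₀ < lam₀ → ∀ j₁, ρ₁ < j₁ → j₁ < lam₁ → (j₀ ∈ A → j₁ ≠ σ j₀) →
        (β₀ + γ₀ j₀ ≠ β₁ + γ₁ j₁ ∧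
          β₀ + γ₀ j₀ ≠ β₀₁ + γ₀ j₀ + γ₁ j₁ ∧
          β₁ + γ₁ j₁ ≠ β₀₁ + γ₀ j₀ + γ₁ j₁)) ∧
    (∀ ν₀, ν₀ < lam₀ → ∀ ν₁, ν₁ < lam₁ →
      ∃ j₀, ν₀ < j₀ ∧ j₀ < lam₀ ∧ ∃ j₁, ν₁ < j₁ ∧ j₁ < lam₁ ∧
        (β₀ + γ₀ j₀ ≠ β₁ + γ₁ j₁ ∧
          β₀ + γ₀ j₀ ≠ β₀₁ + γ₀ j₀ + γ₁ j₁ ∧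
          β₁ + γ₁ j₁ ≠ β₀₁ + γ₀ j₀ + γ₁ j₁)) := by
  classical
  have inj₁ : ∀ j j', j < lam₁ → j' < lam₁ → γ₁ j = γ₁ j' → j = j' := by
    intro j j' hj hj' h
    rcases lt_trichotomy j j' with h1|h1|h1
    · exact absurd h (hm₁ j j' h1 hj').ne
    · exact h1
    · exact absurd h.symm (hm₁ j' j h1 hj).ne
  have inj₀ : ∀ j j', j < lam₀ → j' < lam₀ → γ₀ j = γ₀ j' → j = j' := by
    intro j j' hj hj' h
    rcases lt_trichotomy j j' with h1|h1|h1
    · exact absurd h (hm₀ j j' h1 hj').ne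
    · exact h1
    · exact absurd h.symm (hm₀ j' j h1 hj).ne
  set ρ₀ : Ordinal := if h : ∃ b, b < lam₀ ∧ γ₀ b = β₁ - β₀₁ then h.choose else 0 with hρ₀def
  set ρ₁ : Ordinal := if h : ∃ b, b < lam₁ ∧ γ₁ b = β₀ - β₀₁ then h.choose else 0 with hρ₁def
  have hρ₀lt : ρ₀ < lam₀ := by
    rw [hρ₀def]; split
    · next h => exact h.choose_spec.1
    · exact h₀.pos
  have hρ₁lt : ρ₁ < lam₁ := by
    rw [hρ₁def]; split
    · next h => exact h.choose_spec.1
    · exact h₁.pos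
  set A : Set Ordinal := {j | j < lam₀ ∧ ∃ b, b < lam₁ ∧ γ₁ b = β₀ - β₁ + γ₀ j} with hAdef
  set σ : Ordinal → Ordinal :=
    fun j => if h : ∃ b, b < lam₁ ∧ γ₁ b = β₀ - β₁ + γ₀ j then h.choose else 0 with hσdef
  have key : ∀ j₀, ρ₀ < j₀ → j₀ < lam₀ → ∀ j₁, ρ₁ < j₁ → j₁ < lam₁ → (j₀ ∈ A → j₁ ≠ σ j₀) →
      (β₀ + γ₀ j₀ ≠ β₁ + γ₁ j₁ ∧
        β₀ + γ₀ j₀ ≠ β₀₁ + γ₀ j₀ + γ₁ j₁ ∧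
        β₁ + γ₁ j₁ ≠ β₀₁ + γ₀ j₀ + γ₁ j₁) := by
    intro j₀ hr₀ hj₀ j₁ hr₁ hj₁ hav
    refine ⟨?_, ?_, ?_⟩
    · intro heq
      have hγ : γ₁ j₁ = β₀ - β₁ + γ₀ j₀ := by
        have h2 : β₁ + γ₁ j₁ = β₁ + (β₀ - β₁ + γ₀ j₀) := by rw [← heq]; abel
        exact add_left_cancel h2
      have hex : ∃ b, b < lam₁ ∧ γ₁ b = β₀ - β₁ + γ₀ j₀ := ⟨j₁, hj₁, hγ⟩
      have hmem : j₀ ∈ A := ⟨hj₀, hex⟩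
      have hσj : σ j₀ = hex.choose := by rw [hσdef]; simp [hex]
      have : j₁ = hex.choose :=
        inj₁ j₁ hex.choose hj₁ hex.choose_spec.1 (hγ.trans hex.choose_spec.2.symm)
      exact hav hmem (this.trans hσj.symm)
    · intro heq
      have hγ : γ₁ j₁ = β₀ - β₀₁ := by
        have h2 : (β₀₁ + γ₀ j₀) + γ₁ j₁ = (β₀₁ + γ₀ j₀) + (β₀ - β₀₁) := by
          rw [show (β₀₁ + γ₀ j₀) + γ₁ j₁ = β₀₁ + γ₀ j₀ + γ₁ j₁ from rfl, ← heq]; abel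
        exact add_left_cancel h2
      have hex : ∃ b, b < lam₁ ∧ γ₁ b = β₀ - β₀₁ := ⟨j₁, hj₁, hγ⟩
      have hρ : ρ₁ = hex.choose := by rw [hρ₁def]; simp [hex]
      have : j₁ = ρ₁ := by
        rw [hρ]
        exact inj₁ j₁ hex.choose hj₁ hex.choose_spec.1 (hγ.trans hex.choose_spec.2.symm)
      exact absurd this hr₁.ne'
    · intro heq
      have hγ : γ₀ j₀ = β₁ - β₀₁ := by
        have h2 : (β₀₁ + γ₁ j₁) + γ₀ j₀ = (β₀₁ + γ₁ j₁) + (β₁ - β₀₁) := by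
          rw [show (β₀₁ + γ₁ j₁) + γ₀ j₀ = β₀₁ + γ₀ j₀ + γ₁ j₁ by abel, ← heq]; abel
        exact add_left_cancel h2
      have hex : ∃ b, b < lam₀ ∧ γ₀ b = β₁ - β₀₁ := ⟨j₀, hj₀, hγ⟩
      have hρ : ρ₀ = hex.choose := by rw [hρ₀def]; simp [hex]
      have : j₀ = ρ₀ := by
        rw [hρ]
        exact inj₀ j₀ hex.choose hj₀ hex.choose_spec.1 (hγ.trans hex.choose_spec.2.symm)
      exact absurd this hr₀.ne'
  refine ⟨⟨ρ₀, hρ₀lt, ρ₁, hρ₁lt, A, σ, fun j hj => hj.1, ?_, key⟩, ?_⟩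
  · intro j hj
    rw [hσdef]
    simp only
    split
    · next h => exact h.choose_spec.1
    · exact h₁.pos
  · intro ν₀ hν₀ ν₁ hν₁
    set j₀ : Ordinal := Order.succ (max ρ₀ ν₀) with hj₀def
    have hj₀lt : j₀ < lam₀ := h₀.succ_lt (max_lt hρ₀lt hν₀)
    have hrj₀ : ρ₀ < j₀ := (le_max_left _ _).trans_lt (Order.lt_succ _)
    have hνj₀ : ν₀ < j₀ := (le_max_right _ _).trans_lt (Order.lt_succ _)
    set m : Ordinal := max ρ₁ ν₁ with hmdef
    have hmlt : m < lam₁ := max_lt hρ₁lt hν₁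
    by_cases hc : j₀ ∈ A ∧ σ j₀ = Order.succ m
    · refine ⟨j₀, hνj₀, hj₀lt, Order.succ (Order.succ m), ?_, ?_, ?_⟩
      · exact ((le_max_right _ _).trans_lt (Order.lt_succ _)).trans (Order.lt_succ _)
      · exact h₁.succ_lt (h₁.succ_lt hmlt)
      · refine key j₀ hrj₀ hj₀lt _ ?_ (h₁.succ_lt (h₁.succ_lt hmlt)) ?_
        · exact ((le_max_left _ _).trans_lt (Order.lt_succ _)).trans (Order.lt_succ _)
        · intro _ heq
          rw [hc.2] at heq
          exact absurd heq (Order.lt_succ _).ne'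
    · refine ⟨j₀, hνj₀, hj₀lt, Order.succ m, (le_max_right _ _).trans_lt (Order.lt_succ _),
        h₁.succ_lt hmlt, ?_⟩
      refine key j₀ hrj₀ hj₀lt _ ((le_max_left _ _).trans_lt (Order.lt_succ _))
        (h₁.succ_lt hmlt) ?_
      intro hA heq
      exact hc ⟨hA, heq.symm⟩
end

section
/- Let G be a linearly ordered abelian group, let m be a natural number, let S be a set of nonempty subsets of {0,…,m}, let (β_σ)_{σ∈S} be elements of G, let (t_e)_{0≤e≤m} be positive integers, let λ_0,…,λ_m be limit ordinals, and for each 0 ≤ e ≤ m let (γ_{e,j})_{j<λ_e} be a strictly increasing family of elements ≥ 0 of G. For a choice of ordinals j_e < λ_e (0 ≤ e ≤ m) and σ ∈ S set P_{σ} = β_σ + Σ_{e∈σ} t_e·γ_{e,j_e}. Then for any ordinals ρ_e < λ_e (0 ≤ e ≤ m) there exist ordinals j_e with ρ_e < j_e < λ_e (0 ≤ e ≤ m) such that the elements P_σ, σ ∈ S, are pairwise distinct. -/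
open scoped symmDiff


/-- Lemma 4 (oe1) of the paper: given a set `S` of nonempty subsets of `{0,…,m}`, elements
`β σ` of a linearly ordered abelian group, positive integers `t e`, and strictly increasing
nonnegative families `γ e` indexed by ordinals below limit ordinals `lam e`, for any bounds
`ρ e < lam e` there are indices `ρ e < j e < lam e` making the elements
`β σ + ∑_{e ∈ σ} t e • γ e (j e)`, `σ ∈ S`, pairwise distinct. -/
theorem oe1_lemma {G : Type*} [AddCommGroup G] [LinearOrder G] [IsOrderedAddMonoid G] (m : ℕ)
    (S : Set (Finset (Fin (m + 1)))) (hS : ∀ σ ∈ S, σ.Nonempty)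
    (β : Finset (Fin (m + 1)) → G) (t : Fin (m + 1) → ℤ) (ht : ∀ e, 0 < t e)
    (lam : Fin (m + 1) → Ordinal) (hlam : ∀ e, Order.IsSuccLimit (lam e))
    (γ : Fin (m + 1) → Ordinal → G)
    (hmono : ∀ e, ∀ j j' : Ordinal, j < j' → j' < lam e → γ e j < γ e j')
    (hnonneg : ∀ e, ∀ j < lam e, (0 : G) ≤ γ e j)
    (ρ : Fin (m + 1) → Ordinal) (hρ : ∀ e, ρ e < lam e) :
    ∃ j : Fin (m + 1) → Ordinal, (∀ e, ρ e < j e ∧ j e < lam e) ∧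
      ∀ σ ∈ S, ∀ σ' ∈ S, σ ≠ σ' →
        β σ + ∑ e ∈ σ, t e • γ e (j e) ≠ β σ' + ∑ e ∈ σ', t e • γ e (j e) := by
  -- strict monotonicity of `x ↦ t e • γ e x`
  have hsm : ∀ e : Fin (m + 1), ∀ x y : Ordinal, x < y → y < lam e →
      t e • γ e x < t e • γ e y := fun e x y hxy hy =>
    zsmul_lt_zsmul_right (ht e) (hmono e x y hxy hy)
  have hsucc : ∀ (e : Fin (m + 1)) (a : Ordinal), a < lam e → a + 1 < lam e := by
    intro e a ha
    rw [Ordinal.add_one_eq_succ]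
    exact (hlam e).succ_lt ha
  have hltsucc : ∀ a : Ordinal, a < a + 1 := by
    intro a; rw [Ordinal.add_one_eq_succ]; exact Order.lt_succ a
  have key : ∀ k : ℕ, k ≤ m + 1 → ∃ j : Fin (m + 1) → Ordinal,
      (∀ e, ρ e < j e ∧ j e < lam e) ∧
      ∀ σ ∈ S, ∀ σ' ∈ S, σ ≠ σ' → (∀ e' ∈ σ ∆ σ', (e' : ℕ) < k) →
        β σ + ∑ e ∈ σ, t e • γ e (j e) ≠ β σ' + ∑ e ∈ σ', t e • γ e (j e) := by
    intro k
    induction k with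
    | zero =>
      intro _
      refine ⟨fun e => ρ e + 1, fun e => ⟨hltsucc _, hsucc e _ (hρ e)⟩, ?_⟩
      intro σ hσ σ' hσ' hne hlt
      obtain ⟨e', he'⟩ := Finset.symmDiff_nonempty.2 hne
      exact absurd (hlt e' he') (Nat.not_lt_zero _)
    | succ k ih =>
      intro hk1
      obtain ⟨j, hj, hcol⟩ := ih (Nat.le_of_succ_le hk1)
      set e : Fin (m + 1) := ⟨k, hk1⟩ with he_def
      set f : Fin (m + 1) → G := fun e' => t e' • γ e' (j e') with hf
      -- the "bad" set of values for the new coordinate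
      set B : Set Ordinal := ⋃ p ∈ {p : Finset (Fin (m + 1)) × Finset (Fin (m + 1)) |
          p.1 ∈ S ∧ p.2 ∈ S ∧ e ∈ p.1 ∧ e ∉ p.2},
        {x | x < lam e ∧
          β p.1 + ((∑ e' ∈ p.1.erase e, f e') + t e • γ e x) = β p.2 + ∑ e' ∈ p.2, f e'}
        with hB
      have hBlt : ∀ x ∈ B, x < lam e := by
        intro x hx
        simp only [hB, Set.mem_iUnion, Set.mem_setOf_eq] at hx
        obtain ⟨p, _, hx1, _⟩ := hx
        exact hx1
      have hBfin : B.Finite := by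
        apply Set.Finite.biUnion (Set.toFinite _)
        intro p _
        apply Set.Subsingleton.finite
        intro x hx y hy
        by_contra hxy
        rcases lt_or_gt_of_ne hxy with h | h
        · have h1 := hsm e x y h hy.1
          have h2 : t e • γ e x = t e • γ e y := by
            have := hx.2.trans hy.2.symm
            exact add_left_cancel (add_left_cancel this)
          exact absurd h2 (ne_of_lt h1)
        · have h1 := hsm e y x h hx.1
          have h2 : t e • γ e y = t e • γ e x := by
            have := hy.2.trans hx.2.symm
            exact add_left_cancel (add_left_cancel this)
          exact absurd h2 (ne_of_lt h1)
      have hIfin : (insert (ρ e) B).Finite := hBfin.insert _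
      set a : Ordinal := sSup (insert (ρ e) B) with ha_def
      have ha_mem : a ∈ insert (ρ e) B :=
        Set.Nonempty.csSup_mem ⟨ρ e, Set.mem_insert _ _⟩ hIfin
      have ha_lt : a < lam e := by
        rcases ha_mem with h | h
        · rw [h]; exact hρ e
        · exact hBlt _ h
      set jE : Ordinal := a + 1 with hjE
      have hjElt : jE < lam e := hsucc e a ha_lt
      have hρjE : ρ e < jE :=
        lt_of_le_of_lt (le_csSup hIfin.bddAbove (Set.mem_insert _ _)) (hltsucc a)
      have hjEnotB : jE ∉ B := by
        intro hmem
        have := le_csSup hIfin.bddAbove (Set.mem_insert_of_mem _ hmem)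
        exact absurd this (not_le.2 (hltsucc a))
      set j' : Fin (m + 1) → Ordinal := Function.update j e jE with hj'
      have hj'e : j' e = jE := Function.update_self e jE j
      have hj'ne : ∀ e' : Fin (m + 1), e' ≠ e → j' e' = j e' := fun e' h =>
        Function.update_of_ne h jE j
      -- sums over sets not containing e are unchanged
      have hsum_not : ∀ σ : Finset (Fin (m + 1)), e ∉ σ →
          ∑ e' ∈ σ, t e' • γ e' (j' e') = ∑ e' ∈ σ, f e' := by
        intro σ hσ
        refine Finset.sum_congr rfl fun x hx => ?_
        rw [hj'ne x (by rintro rfl; exact hσ hx)]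
      have hsum_mem : ∀ σ : Finset (Fin (m + 1)), e ∈ σ →
          ∑ e' ∈ σ, t e' • γ e' (j' e') = (∑ e' ∈ σ.erase e, f e') + t e • γ e jE := by
        intro σ hσ
        rw [← Finset.sum_erase_add _ _ hσ, hj'e,
          hsum_not _ (Finset.notMem_erase _ _)]
      refine ⟨j', ?_, ?_⟩
      · intro e'
        by_cases h : e' = e
        · subst h; rw [hj'e]; exact ⟨hρjE, hjElt⟩
        · rw [hj'ne e' h]; exact hj e'
      · intro σ hσ σ' hσ' hne hlt
        have hval : ∀ e' ∈ σ ∆ σ', (e' : ℕ) ≤ k := fun e' h =>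
          Nat.lt_succ_iff.1 (hlt e' h)
        by_cases h1 : e ∈ σ <;> by_cases h2 : e ∈ σ'
        · -- e in both: reduce to the inductive hypothesis
          have hnotd : e ∉ σ ∆ σ' := by
            rw [Finset.mem_symmDiff]
            push_neg
            exact ⟨fun _ => h2, fun _ => h1⟩
          have hcond : ∀ e' ∈ σ ∆ σ', (e' : ℕ) < k := by
            intro e' he'
            rcases lt_or_eq_of_le (hval e' he') with h | h
            · exact h
            · exact absurd he' (by
                have : e' = e := Fin.ext h
                rw [this]; exact hnotd)
          rw [hsum_mem σ h1, hsum_mem σ' h2]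
          intro heq
          have heq2 : β σ + ∑ e' ∈ σ.erase e, f e' = β σ' + ∑ e' ∈ σ'.erase e, f e' := by
            rw [← add_assoc, ← add_assoc] at heq
            exact add_right_cancel heq
          have heq3 : β σ + ∑ e' ∈ σ, f e' = β σ' + ∑ e' ∈ σ', f e' := by
            rw [← Finset.sum_erase_add σ f h1, ← Finset.sum_erase_add σ' f h2,
              ← add_assoc, ← add_assoc, heq2]
          exact hcol σ hσ σ' hσ' hne hcond heq3
        · -- e ∈ σ, e ∉ σ' : would put jE into B
          rw [hsum_mem σ h1, hsum_not σ' h2]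
          intro heq
          apply hjEnotB
          simp only [hB, Set.mem_iUnion, Set.mem_setOf_eq]
          exact ⟨(σ, σ'), ⟨hσ, hσ', h1, h2⟩, hjElt, heq⟩
        · -- e ∉ σ, e ∈ σ' : symmetric
          rw [hsum_not σ h1, hsum_mem σ' h2]
          intro heq
          apply hjEnotB
          simp only [hB, Set.mem_iUnion, Set.mem_setOf_eq]
          exact ⟨(σ', σ), ⟨hσ', hσ, h2, h1⟩, hjElt, heq.symm⟩
        · -- e in neither
          have hnotd : e ∉ σ ∆ σ' := by
            rw [Finset.mem_symmDiff]
            push_neg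
            exact ⟨fun h => absurd h h1, fun h => absurd h h2⟩
          have hcond : ∀ e' ∈ σ ∆ σ', (e' : ℕ) < k := by
            intro e' he'
            rcases lt_or_eq_of_le (hval e' he') with h | h
            · exact h
            · exact absurd he' (by
                have : e' = e := Fin.ext h
                rw [this]; exact hnotd)
          rw [hsum_not σ h1, hsum_not σ' h2]
          exact hcol σ hσ σ' hσ' hne hcond
  obtain ⟨j, hj, hcol⟩ := key (m + 1) le_rfl
  exact ⟨j, hj, fun σ hσ σ' hσ' hne =>
    hcol σ hσ σ' hσ' hne fun e' _ => e'.isLt⟩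
end

section
/- Let V ⊆ V' be an immediate extension of valuation rings with maximal ideals m, m', fraction fields K ⊆ K', and valuation val. Let y_0 ∈ V' and set y_1 = y_0². Assume K' = K(y_0) and that for e = 0,1 the element y_e is a pseudo limit of a pseudo convergent sequence v_e = (v_{e,j})_{j<λ_e} of elements of V which has no pseudo limit in K. Set y_{e,j} = (y_e − v_{e,j})/(v_{e,j+1} − v_{e,j}) ∈ V'. Then for every polynomial g ∈ V[Y_0,Y_1] with deg_{Y_0} g ≤ 1 and deg_{Y_1} g ≤ 1 and every pair of ordinals ν_0 < λ_0, ν_1 < λ_1, there exist ordinals j_0, j_1 with ν_0 < j_0 < λ_0 and ν_1 < j_1 < λ_1, an element c ∈ V, c ≠ 0, and a polynomial g_1 in two variables over V such that g(y_0,y_1) = c · g_1(y_{0,j_0}, y_{1,j_1}), g_1 has at least one coefficient outside m, and the nonzero coefficients of the monomials of g_1 − g_1(0,0) have pairwise distinct values under val. -/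
open MvPolynomial

namespace Ka0Aux

variable {K' : Type*} [Field K'] (V' : ValuationSubring K')

/-- The "gamma" values `val (Y - w j)` of a pseudo limit are nonzero. -/
lemma gamma_ne_zero (lam : Ordinal) (hlam : Order.IsSuccLimit lam) (Y : K') (w : Ordinal → K')
    (hpl : ∀ j j' : Ordinal, j < j' → j' < lam →
      V'.valuation (Y - w j') < V'.valuation (Y - w j))
    {j : Ordinal} (hj : j < lam) : V'.valuation (Y - w j) ≠ 0 := by
  have h1 : j < j + 1 := by rw [Ordinal.add_one_eq_succ]; exact Order.lt_succ j
  have h2 : j + 1 < lam := by rw [Ordinal.add_one_eq_succ]; exact hlam.succ_lt hj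
  have h := hpl j (j + 1) h1 h2
  intro h0
  rw [h0] at h
  exact h.not_ge zero_le'

/-- Differences of the sequence have value `γ j` (the value at the smaller index). -/
lemma val_sub_pair (lam : Ordinal) (Y : K') (w : Ordinal → K')
    (hpl : ∀ j j' : Ordinal, j < j' → j' < lam →
      V'.valuation (Y - w j') < V'.valuation (Y - w j))
    {j j' : Ordinal} (hjj' : j < j') (hj' : j' < lam) :
    V'.valuation (w j - w j') = V'.valuation (Y - w j) := by
  have h := hpl j j' hjj' hj'
  have hrw : w j - w j' = (Y - w j') - (Y - w j) := by ring
  rw [hrw, V'.valuation.map_sub_eq_of_lt_right h]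

/-- Master lemma: for `u` not a pseudo limit of the sequence, the values
`val (u - w j)` are eventually constant and nonzero. -/
lemma exists_tail_const (lam : Ordinal) (hlam : Order.IsSuccLimit lam) (Y : K') (w : Ordinal → K')
    (hpl : ∀ j j' : Ordinal, j < j' → j' < lam →
      V'.valuation (Y - w j') < V'.valuation (Y - w j))
    (u : K')
    (hu : ¬ ∀ j j' : Ordinal, j < j' → j' < lam →
      V'.valuation (u - w j') < V'.valuation (u - w j)) :
    ∃ b, b < lam ∧ ∃ s : V'.ValueGroup, s ≠ 0 ∧
      ∀ j, b < j → j < lam → V'.valuation (u - w j) = s := by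
  by_cases h : ∀ j, j < lam → V'.valuation (u - w j) = V'.valuation (Y - w j)
  · exact absurd (fun j j' hjj' hj' => by
      rw [h j (hjj'.trans hj'), h j' hj']; exact hpl j j' hjj' hj') hu
  · push_neg at h
    obtain ⟨j₀, hj₀, hne⟩ := h
    have key : ∀ j, j₀ < j → u - w j = (w j₀ - w j) + (u - w j₀) := by
      intro j _; ring
    rcases hne.lt_or_gt with hlt | hgt
    · refine ⟨j₀, hj₀, V'.valuation (Y - w j₀),
        gamma_ne_zero V' lam hlam Y w hpl hj₀, fun j hj₀j hj => ?_⟩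
      have hx : V'.valuation (w j₀ - w j) = V'.valuation (Y - w j₀) :=
        val_sub_pair V' lam Y w hpl hj₀j hj
      rw [key j hj₀j, V'.valuation.map_add_of_distinct_val (by rw [hx]; exact hlt.ne'), hx]
      exact max_eq_left hlt.le
    · refine ⟨j₀, hj₀, V'.valuation (u - w j₀), ?_, fun j hj₀j hj => ?_⟩
      · intro h0
        rw [h0] at hgt
        exact hgt.not_ge zero_le'
      · have hx : V'.valuation (w j₀ - w j) = V'.valuation (Y - w j₀) :=
          val_sub_pair V' lam Y w hpl hj₀j hj
        rw [key j hj₀j, V'.valuation.map_add_of_distinct_val (by rw [hx]; exact hgt.ne), hx]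
        exact max_eq_right hgt.le

/-- Affine version of the master lemma: values of `a + b * w j` are eventually constant. -/
lemma exists_tail_affine (lam : Ordinal) (hlam : Order.IsSuccLimit lam) (Y : K') (w : Ordinal → K')
    (hpl : ∀ j j' : Ordinal, j < j' → j' < lam →
      V'.valuation (Y - w j') < V'.valuation (Y - w j))
    (K : Subfield K')
    (hnpl : ∀ u ∈ K, ¬ ∀ j j' : Ordinal, j < j' → j' < lam →
      V'.valuation (u - w j') < V'.valuation (u - w j))
    (a b : K') (ha : a ∈ K) (hb : b ∈ K) :
    ∃ bnd, bnd < lam ∧ ∃ s : V'.ValueGroup,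
      ∀ j, bnd < j → j < lam → V'.valuation (a + b * w j) = s := by
  by_cases hb0 : b = 0
  · exact ⟨0, hlam.pos, V'.valuation a, fun j _ _ => by rw [hb0, zero_mul, add_zero]⟩
  · have hu : -(a / b) ∈ K := K.neg_mem (K.div_mem ha hb)
    obtain ⟨bnd, hbnd, s, _, hs⟩ :=
      exists_tail_const V' lam hlam Y w hpl (-(a / b)) (hnpl _ hu)
    refine ⟨bnd, hbnd, V'.valuation b * s, fun j hj hjl => ?_⟩
    have hrw : a + b * w j = b * (w j - -(a / b)) := by
      field_simp
      ring
    rw [hrw, map_mul, V'.valuation.map_sub_swap, hs j hj hjl]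

/-- One can find an index beyond any bound whose `γ` value avoids two given values. -/
lemma exists_good_index (lam : Ordinal) (hlam : Order.IsSuccLimit lam) (Y : K') (w : Ordinal → K')
    (hpl : ∀ j j' : Ordinal, j < j' → j' < lam →
      V'.valuation (Y - w j') < V'.valuation (Y - w j))
    (bnd : Ordinal) (hbnd : bnd < lam) (s1 s2 : V'.ValueGroup) :
    ∃ j, bnd < j ∧ j < lam ∧
      V'.valuation (Y - w j) ≠ s1 ∧ V'.valuation (Y - w j) ≠ s2 := by
  have h1 : bnd + 1 < lam := by rw [Ordinal.add_one_eq_succ]; exact hlam.succ_lt hbnd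
  have h2 : bnd + 1 + 1 < lam := by rw [Ordinal.add_one_eq_succ]; exact hlam.succ_lt h1
  have h3 : bnd + 1 + 1 + 1 < lam := by rw [Ordinal.add_one_eq_succ]; exact hlam.succ_lt h2
  have l01 : bnd < bnd + 1 := by rw [Ordinal.add_one_eq_succ]; exact Order.lt_succ bnd
  have l12 : bnd + 1 < bnd + 1 + 1 := by
    rw [Ordinal.add_one_eq_succ (bnd + 1)]; exact Order.lt_succ (bnd + 1)
  have l23 : bnd + 1 + 1 < bnd + 1 + 1 + 1 := by
    rw [Ordinal.add_one_eq_succ (bnd + 1 + 1)]; exact Order.lt_succ (bnd + 1 + 1)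
  have d12 : V'.valuation (Y - w (bnd + 1)) ≠ V'.valuation (Y - w (bnd + 1 + 1)) :=
    (hpl _ _ l12 h2).ne'
  have d13 : V'.valuation (Y - w (bnd + 1)) ≠ V'.valuation (Y - w (bnd + 1 + 1 + 1)) :=
    (hpl _ _ (l12.trans l23) h3).ne'
  have d23 : V'.valuation (Y - w (bnd + 1 + 1)) ≠ V'.valuation (Y - w (bnd + 1 + 1 + 1)) :=
    (hpl _ _ l23 h3).ne'
  by_cases e1 : V'.valuation (Y - w (bnd + 1)) ≠ s1 ∧ V'.valuation (Y - w (bnd + 1)) ≠ s2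
  · exact ⟨bnd + 1, l01, h1, e1.1, e1.2⟩
  by_cases e2 : V'.valuation (Y - w (bnd + 1 + 1)) ≠ s1 ∧
      V'.valuation (Y - w (bnd + 1 + 1)) ≠ s2
  · exact ⟨bnd + 1 + 1, l01.trans l12, h2, e2.1, e2.2⟩
  have e1' : V'.valuation (Y - w (bnd + 1)) = s1 ∨ V'.valuation (Y - w (bnd + 1)) = s2 := by
    rcases not_and_or.1 e1 with h | h
    exacts [Or.inl (not_ne_iff.1 h), Or.inr (not_ne_iff.1 h)]
  have e2' : V'.valuation (Y - w (bnd + 1 + 1)) = s1 ∨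
      V'.valuation (Y - w (bnd + 1 + 1)) = s2 := by
    rcases not_and_or.1 e2 with h | h
    exacts [Or.inl (not_ne_iff.1 h), Or.inr (not_ne_iff.1 h)]
  refine ⟨bnd + 1 + 1 + 1, (l01.trans l12).trans l23, h3, ?_, ?_⟩
  · intro h
    rcases e1' with f | f
    · exact d13 (f.trans h.symm)
    · rcases e2' with g2 | g2
      · exact d23 (g2.trans h.symm)
      · exact d12 (f.trans g2.symm)
  · intro h
    rcases e1' with f | f
    · rcases e2' with g2 | g2
      · exact d12 (f.trans g2.symm)
      · exact d23 (g2.trans h.symm)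
    · exact d13 (f.trans h.symm)

/-- In a valuation subring (total divisibility), among finitely many elements not all zero
there is a nonzero one dividing all others. -/
lemma exists_champion {ι : Type*} [DecidableEq ι] (V : Subring K')
    (htot : ∀ x y : K', x ∈ V → y ∈ V → x / y ∈ V ∨ y / x ∈ V)
    (s : Finset ι) (k : ι → K') (hkV : ∀ i ∈ s, k i ∈ V) (hex : ∃ i ∈ s, k i ≠ 0) :
    ∃ i₀ ∈ s, k i₀ ≠ 0 ∧ ∀ i ∈ s, k i / k i₀ ∈ V := by
  classical
  induction s using Finset.induction_on with
  | empty => simp at hex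
  | @insert a s' ha ih =>
    by_cases hex' : ∃ i ∈ s', k i ≠ 0
    · obtain ⟨i₀, hi₀s, hi₀, hdiv⟩ := ih (fun i hi => hkV i (Finset.mem_insert_of_mem hi)) hex'
      have hkaV : k a ∈ V := hkV a (Finset.mem_insert_self a s')
      rcases htot (k a) (k i₀) hkaV (hkV i₀ (Finset.mem_insert_of_mem hi₀s)) with h | h
      · refine ⟨i₀, Finset.mem_insert_of_mem hi₀s, hi₀, fun i hi => ?_⟩
        rcases Finset.mem_insert.1 hi with rfl | hi'
        · exact h
        · exact hdiv i hi'
      · by_cases hka : k a = 0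
        · refine ⟨i₀, Finset.mem_insert_of_mem hi₀s, hi₀, fun i hi => ?_⟩
          rcases Finset.mem_insert.1 hi with rfl | hi'
          · rw [hka, zero_div]; exact V.zero_mem
          · exact hdiv i hi'
        · refine ⟨a, Finset.mem_insert_self a s', hka, fun i hi => ?_⟩
          rcases Finset.mem_insert.1 hi with rfl | hi'
          · rw [div_self hka]; exact V.one_mem
          · have hrw : k i / k a = k i / k i₀ * (k i₀ / k a) := by
              rw [div_mul_div_cancel₀ hi₀]
            rw [hrw]
            exact V.mul_mem (hdiv i hi') h
    · push_neg at hex'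
      obtain ⟨i1, hi1, hne⟩ := hex
      rcases Finset.mem_insert.1 hi1 with rfl | h'
      · refine ⟨i1, Finset.mem_insert_self _ _, hne, fun i hi => ?_⟩
        rcases Finset.mem_insert.1 hi with rfl | hi'
        · rw [div_self hne]; exact V.one_mem
        · rw [hex' i hi', zero_div]; exact V.zero_mem
      · exact absurd (hex' i1 h') hne

/-- Product of powers over a `Fin 2` finsupp. -/
lemma prod_pow_fin2 (ζ : Fin 2 → K') (d : Fin 2 →₀ ℕ) :
    (d.prod fun e n => ζ e ^ n) = ζ 0 ^ d 0 * ζ 1 ^ d 1 := by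
  rw [Finsupp.prod_fintype _ _ fun i => pow_zero _]
  exact Fin.prod_univ_two _

/-- Assembly: given the four coefficients with the right value pattern, build `c` and `g₁`. -/
lemma assemble (V : Subring K')
    (htot : ∀ x y : K', x ∈ V → y ∈ V → x / y ∈ V ∨ y / x ∈ V)
    (ζ : Fin 2 → K') (k : Fin 4 → K') (hkV : ∀ i, k i ∈ V)
    (hex : ∃ i, k i ≠ 0) (m : Fin 4 → (Fin 2 →₀ ℕ)) (hm0 : m 0 = 0)
    (hminj : Function.Injective m)
    (hval : ∀ i i' : Fin 4, i ≠ 0 → i' ≠ 0 → i ≠ i' → k i ≠ 0 → k i' ≠ 0 →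
      V'.valuation (k i) ≠ V'.valuation (k i')) :
    ∃ c : ↥V, c ≠ 0 ∧ ∃ g₁ : MvPolynomial (Fin 2) ↥V,
      ((c : K') * MvPolynomial.eval₂ V.subtype ζ g₁ =
        ∑ i : Fin 4, k i * ((m i).prod fun e n => ζ e ^ n)) ∧
      (∃ d ∈ g₁.support, IsUnit (g₁.coeff d)) ∧
      (∀ d ∈ g₁.support, ∀ d' ∈ g₁.support, d ≠ 0 → d' ≠ 0 → d ≠ d' →
        V'.valuation ((g₁.coeff d : ↥V) : K') ≠ V'.valuation ((g₁.coeff d' : ↥V) : K')) := by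
  classical
  obtain ⟨i₀, -, hi₀, hdiv⟩ :=
    exists_champion V htot Finset.univ k (fun i _ => hkV i) (by simpa using hex)
  set q : Fin 4 → ↥V := fun i => ⟨k i / k i₀, hdiv i (Finset.mem_univ i)⟩ with hq
  set g₁ : MvPolynomial (Fin 2) ↥V := ∑ i : Fin 4, monomial (m i) (q i) with hg₁
  have hcoeff : ∀ i, g₁.coeff (m i) = q i := by
    intro i
    rw [hg₁, MvPolynomial.coeff_sum]
    rw [Finset.sum_eq_single i]
    · rw [coeff_monomial, if_pos rfl]
    · intro b _ hbi
      rw [coeff_monomial, if_neg (fun h => hbi (hminj h))]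
    · intro h; exact absurd (Finset.mem_univ i) h
  have hsupp : ∀ d ∈ g₁.support, ∃ i, d = m i := by
    intro d hd
    by_contra hno
    push_neg at hno
    apply MvPolynomial.mem_support_iff.1 hd
    rw [hg₁, MvPolynomial.coeff_sum]
    refine Finset.sum_eq_zero fun i _ => ?_
    rw [coeff_monomial, if_neg (fun h => hno i h.symm)]
  have hqk : ∀ i, ((q i : ↥V) : K') = k i / k i₀ := fun i => rfl
  have hq0 : ∀ i, q i ≠ 0 → k i ≠ 0 := by
    intro i h hk
    apply h
    apply Subtype.ext
    rw [hqk, hk, zero_div]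
    rfl
  have hqi₀ : q i₀ = 1 := Subtype.ext (by rw [hqk, div_self hi₀]; rfl)
  have hone : (1 : ↥V) ≠ 0 := fun h => by
    have := congrArg (Subtype.val) h
    simpa using this
  refine ⟨⟨k i₀, hkV i₀⟩, fun h => hi₀ (by simpa using congrArg Subtype.val h), g₁, ?_, ?_, ?_⟩
  · rw [hg₁, MvPolynomial.eval₂_sum, Finset.mul_sum]
    refine Finset.sum_congr rfl fun i _ => ?_
    rw [MvPolynomial.eval₂_monomial]
    show k i₀ * ((k i / k i₀) * _) = _
    rw [← mul_assoc, mul_div_cancel₀ _ hi₀]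
  · refine ⟨m i₀, MvPolynomial.mem_support_iff.2 ?_, ?_⟩
    · rw [hcoeff i₀, hqi₀]; exact hone
    · rw [hcoeff i₀, hqi₀]; exact isUnit_one
  · intro d hd d' hd' hd0 hd'0 hdd'
    obtain ⟨i, rfl⟩ := hsupp d hd
    obtain ⟨i', rfl⟩ := hsupp d' hd'
    have hki : k i ≠ 0 := hq0 i (by rw [← hcoeff i]; exact MvPolynomial.mem_support_iff.1 hd)
    have hki' : k i' ≠ 0 :=
      hq0 i' (by rw [← hcoeff i']; exact MvPolynomial.mem_support_iff.1 hd')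
    have hi0 : i ≠ 0 := fun h => hd0 (by rw [h, hm0])
    have hi'0 : i' ≠ 0 := fun h => hd'0 (by rw [h, hm0])
    have hii' : i ≠ i' := fun h => hdd' (by rw [h])
    intro hEq
    apply hval i i' hi0 hi'0 hii' hki hki'
    rw [hcoeff i, hcoeff i'] at hEq
    rw [hqk, hqk] at hEq
    have e1 : V'.valuation (k i) = V'.valuation (k i / k i₀) * V'.valuation (k i₀) := by
      rw [← map_mul]
      congr 1
      rw [div_mul_cancel₀ _ hi₀]
    have e2 : V'.valuation (k i') = V'.valuation (k i' / k i₀) * V'.valuation (k i₀) := by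
      rw [← map_mul]
      congr 1
      rw [div_mul_cancel₀ _ hi₀]
    rw [e1, e2, hEq]

/-- A polynomial of degree `≤ 1` in each of two variables is the sum of its four monomials. -/
lemma rep {R : Type*} [CommRing R] (g : MvPolynomial (Fin 2) R) (hdeg : ∀ i, g.degreeOf i ≤ 1)
    (M : Fin 4 → (Fin 2 →₀ ℕ)) (hminj : Function.Injective M)
    (hM0 : M 0 = 0) (hM1 : M 1 = Finsupp.single 0 1) (hM2 : M 2 = Finsupp.single 1 1)
    (hM3 : M 3 = Finsupp.single 0 1 + Finsupp.single 1 1) :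
    g = ∑ i : Fin 4, monomial (M i) (g.coeff (M i)) := by
  classical
  have hd4 : ∀ d ∈ g.support, ∃ i, d = M i := by
    intro d hd
    have h0 : d 0 ≤ 1 := le_trans (MvPolynomial.monomial_le_degreeOf 0 hd) (hdeg 0)
    have h1 : d 1 ≤ 1 := le_trans (MvPolynomial.monomial_le_degreeOf 1 hd) (hdeg 1)
    have hrep : d = Finsupp.single 0 (d 0) + Finsupp.single 1 (d 1) := by
      ext i
      fin_cases i <;> simp [Finsupp.single_apply]
    rcases Nat.le_one_iff_eq_zero_or_eq_one.1 h0 with h0' | h0' <;>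
      rcases Nat.le_one_iff_eq_zero_or_eq_one.1 h1 with h1' | h1' <;>
      rw [h0', h1'] at hrep
    · exact ⟨0, by rw [hM0, hrep]; simp⟩
    · exact ⟨2, by rw [hM2, hrep]; simp⟩
    · exact ⟨1, by rw [hM1, hrep]; simp⟩
    · exact ⟨3, by rw [hM3, hrep]⟩
  ext d
  rw [MvPolynomial.coeff_sum]
  by_cases h4 : ∃ i, M i = d
  · obtain ⟨i, rfl⟩ := h4
    rw [Finset.sum_eq_single i]
    · rw [coeff_monomial, if_pos rfl]
    · intro b _ hbi
      rw [coeff_monomial, if_neg (fun h => hbi (hminj h))]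
    · intro h; exact absurd (Finset.mem_univ i) h
  · push_neg at h4
    have hd : d ∉ g.support := fun hd => by
      obtain ⟨i, hi⟩ := hd4 d hd
      exact h4 i hi.symm
    rw [MvPolynomial.notMem_support_iff.1 hd]
    symm
    refine Finset.sum_eq_zero fun i _ => ?_
    rw [coeff_monomial, if_neg (h4 i)]

end Ka0Aux

open Ka0Aux

/-- Lemma ka0 of the paper. `V ⊆ V'` is an immediate extension of valuation rings with
fraction fields `K ⊆ K'`, `y 0 ∈ V'`, `y 1 = (y 0)²`, `K' = K(y 0)`, and each `y e` is a
pseudo limit of a pseudo convergent sequence `v e` of elements of `V` with no pseudo limit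
in `K`.  Then every polynomial `g` of degree `≤ 1` in each of the two variables can be
rewritten, beyond any pair of indices `ν`, as `g(y 0, y 1) = c • g₁(y_{0,j₀}, y_{1,j₁})`
with `c ≠ 0`, `g₁` having a coefficient outside the maximal ideal of `V`, and the nonzero
coefficients of the monomials of `g₁ - g₁(0,0)` having pairwise distinct values. -/
theorem lemma_ka0 {K' : Type*} [Field K'] (V' : ValuationSubring K') (V : Subring K')
    (K : Subfield K')
    (hVV' : (V : Set K') ⊆ ↑V')
    (hVK : (V : Set K') ⊆ ↑K)
    (hfrac : ∀ z ∈ K, ∃ a ∈ V, ∃ b ∈ V, b ≠ 0 ∧ z = a / b)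
    (hvr : ∀ z ∈ K, z ∈ V ∨ z⁻¹ ∈ V)
    (himv : ∀ z : K', z ∈ V' → z ≠ 0 → ∃ a ∈ V, a ≠ 0 ∧ V'.valuation z = V'.valuation a)
    (himr : ∀ z : K', z ∈ V' → ∃ a ∈ V, V'.valuation (z - a) < 1)
    (y : Fin 2 → K') (hy0 : y 0 ∈ V') (hy1 : y 1 = y 0 ^ 2)
    (hKy : Subfield.closure ((K : Set K') ∪ {y 0}) = ⊤)
    (lam : Fin 2 → Ordinal) (hlam : ∀ e, Order.IsSuccLimit (lam e))
    (v : Fin 2 → Ordinal → K')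
    (hvV : ∀ e, ∀ j < lam e, v e j ∈ V)
    (hpc : ∀ e, ∀ j j' j'' : Ordinal, j < j' → j' < j'' → j'' < lam e →
      V'.valuation (v e j' - v e j'') < V'.valuation (v e j - v e j''))
    (hpl : ∀ e, ∀ j j' : Ordinal, j < j' → j' < lam e →
      V'.valuation (y e - v e j') < V'.valuation (y e - v e j))
    (hnpl : ∀ e, ∀ w ∈ K, ¬ (∀ j j' : Ordinal, j < j' → j' < lam e →
      V'.valuation (w - v e j') < V'.valuation (w - v e j)))
    (g : MvPolynomial (Fin 2) ↥V)
    (hdeg : ∀ i, g.degreeOf i ≤ 1)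
    (ν : Fin 2 → Ordinal) (hν : ∀ e, ν e < lam e) :
    ∃ j : Fin 2 → Ordinal, (∀ e, ν e < j e ∧ j e < lam e) ∧
      ∃ c : ↥V, c ≠ 0 ∧
        ∃ g₁ : MvPolynomial (Fin 2) ↥V,
          MvPolynomial.eval₂ V.subtype y g =
            (c : K') * MvPolynomial.eval₂ V.subtype
              (fun e => (y e - v e (j e)) / (v e (j e + 1) - v e (j e))) g₁ ∧
          (∃ d ∈ g₁.support, IsUnit (g₁.coeff d)) ∧
          (∀ d ∈ g₁.support, ∀ d' ∈ g₁.support, d ≠ 0 → d' ≠ 0 → d ≠ d' →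
            V'.valuation ((g₁.coeff d : ↥V) : K') ≠ V'.valuation ((g₁.coeff d' : ↥V) : K')) := by
  classical
  -- total divisibility in V
  have htot : ∀ x y : K', x ∈ V → y ∈ V → x / y ∈ V ∨ y / x ∈ V := by
    intro x y hx hy
    by_cases hy0 : y = 0
    · left; rw [hy0, div_zero]; exact V.zero_mem
    · rcases hvr (x / y) (K.div_mem (hVK hx) (hVK hy)) with h | h
      · exact Or.inl h
      · right; rwa [inv_div] at h
  -- basic facts about γ and δ
  have hsucc : ∀ e, ∀ j : Ordinal, j < lam e → j + 1 < lam e := by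
    intro e j hj
    rw [Ordinal.add_one_eq_succ]; exact (hlam e).succ_lt hj
  have hlt1 : ∀ j : Ordinal, j < j + 1 := by
    intro j; rw [Ordinal.add_one_eq_succ]; exact Order.lt_succ j
  have hγ0 : ∀ e, ∀ j : Ordinal, j < lam e → V'.valuation (y e - v e j) ≠ 0 := fun e j hj =>
    gamma_ne_zero V' (lam e) (hlam e) (y e) (v e) (hpl e) hj
  have hδval : ∀ e, ∀ j : Ordinal, j < lam e →
      V'.valuation (v e (j + 1) - v e j) = V'.valuation (y e - v e j) := by
    intro e j hj
    rw [V'.valuation.map_sub_swap]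
    exact val_sub_pair V' (lam e) (y e) (v e) (hpl e) (hlt1 j) (hsucc e j hj)
  have hδne : ∀ e, ∀ j : Ordinal, j < lam e → v e (j + 1) - v e j ≠ 0 := by
    intro e j hj h0
    apply hγ0 e j hj
    rw [← hδval e j hj, h0, map_zero]
  have h2K : (2 : K') ∈ K := by
    rw [show (2 : K') = 1 + 1 from (one_add_one_eq_two).symm]
    exact K.add_mem K.one_mem K.one_mem
  have h2V : (2 : K') ∈ V := by
    rw [show (2 : K') = 1 + 1 from (one_add_one_eq_two).symm]
    exact V.add_mem V.one_mem V.one_mem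
  by_cases hg : g = 0
  · -- case g = 0 : use the relation y 1 = (y 0)^2
    obtain ⟨bnd, hbnd, s', hs'⟩ :=
      exists_tail_affine V' (lam 0) (hlam 0) (y 0) (v 0) (hpl 0) K (hnpl 0)
        0 2 K.zero_mem h2K
    obtain ⟨j0, hj0b, hj0l, hγ0s1, -⟩ :=
      exists_good_index V' (lam 0) (hlam 0) (y 0) (v 0) (hpl 0)
        (max (ν 0) bnd) (max_lt (hν 0) hbnd) s' s'
    set γ0 : V'.ValueGroup := V'.valuation (y 0 - v 0 j0) with hγ0def
    obtain ⟨j1, hj1b, hj1l, hγ1s1, hγ1s2⟩ :=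
      exists_good_index V' (lam 1) (hlam 1) (y 1) (v 1) (hpl 1)
        (ν 1) (hν 1) (γ0 * γ0) (s' * γ0)
    set γ1 : V'.ValueGroup := V'.valuation (y 1 - v 1 j1) with hγ1def
    set jj : Fin 2 → Ordinal := ![j0, j1] with hjj
    set Z : Fin 2 → K' :=
      (fun e => (y e - v e (jj e)) / (v e (jj e + 1) - v e (jj e))) with hZ
    have hjj0 : jj 0 = j0 := rfl
    have hjj1 : jj 1 = j1 := rfl
    set w0 : K' := v 0 j0 with hw0
    set w1 : K' := v 1 j1 with hw1
    set δ0 : K' := v 0 (j0 + 1) - v 0 j0 with hδ0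
    set δ1 : K' := v 1 (j1 + 1) - v 1 j1 with hδ1
    have hδ0ne : δ0 ≠ 0 := hδne 0 j0 hj0l
    have hδ1ne : δ1 ≠ 0 := hδne 1 j1 hj1l
    set k : Fin 4 → K' := ![w0 ^ 2 - w1, 2 * w0 * δ0, -δ1, δ0 * δ0] with hk
    set m : Fin 4 → (Fin 2 →₀ ℕ) :=
      ![0, Finsupp.single 0 1, Finsupp.single 1 1, Finsupp.single 0 2] with hm
    have hm00 : m 0 = 0 := rfl
    -- values of m at points
    have hmv0 : ∀ i : Fin 4, m i 0 = ![0, 1, 0, 2] i := by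
      intro i
      fin_cases i <;> simp [hm, Finsupp.single_apply]
    have hmv1 : ∀ i : Fin 4, m i 1 = ![0, 0, 1, 0] i := by
      intro i
      fin_cases i <;> simp [hm, Finsupp.single_apply]
    have hminj : Function.Injective m := by
      have hcomp : (fun d : Fin 2 →₀ ℕ => (d 0, d 1)) ∘ m =
          fun i => (![0, 1, 0, 2] i, ![0, 0, 1, 0] i) := by
        funext i
        show (m i 0, m i 1) = _
        rw [hmv0 i, hmv1 i]
      have h1 : Function.Injective ((fun d : Fin 2 →₀ ℕ => (d 0, d 1)) ∘ m) := by
        rw [hcomp]; decide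
      exact h1.of_comp
    -- memberships
    have hw0V : w0 ∈ V := hvV 0 j0 hj0l
    have hw1V : w1 ∈ V := hvV 1 j1 hj1l
    have hδ0V : δ0 ∈ V := V.sub_mem (hvV 0 (j0 + 1) (hsucc 0 j0 hj0l)) hw0V
    have hδ1V : δ1 ∈ V := V.sub_mem (hvV 1 (j1 + 1) (hsucc 1 j1 hj1l)) hw1V
    have hkV : ∀ i, k i ∈ V := by
      intro i
      fin_cases i
      · exact V.sub_mem (by rw [sq]; exact V.mul_mem hw0V hw0V) hw1V
      · exact V.mul_mem (V.mul_mem h2V hw0V) hδ0V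
      · exact V.neg_mem hδ1V
      · exact V.mul_mem hδ0V hδ0V
    have hex : ∃ i, k i ≠ 0 := ⟨3, mul_ne_zero hδ0ne hδ0ne⟩
    -- value computations
    have hv1 : V'.valuation (k 1) = s' * γ0 := by
      show V'.valuation (2 * w0 * δ0) = s' * γ0
      rw [map_mul, show (2 : K') * w0 = 0 + 2 * v 0 j0 by rw [zero_add],
        hs' j0 (lt_of_le_of_lt (le_max_right _ _) hj0b) hj0l, hδval 0 j0 hj0l]
    have hv2 : V'.valuation (k 2) = γ1 := by
      show V'.valuation (-δ1) = γ1
      rw [Valuation.map_neg, hδval 1 j1 hj1l]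
    have hv3 : V'.valuation (k 3) = γ0 * γ0 := by
      show V'.valuation (δ0 * δ0) = γ0 * γ0
      rw [map_mul, hδval 0 j0 hj0l]
    have hγ0ne : γ0 ≠ 0 := hγ0 0 j0 hj0l
    have d12 : V'.valuation (k 1) ≠ V'.valuation (k 2) := by
      rw [hv1, hv2]; exact fun h => hγ1s2 h.symm
    have d13 : V'.valuation (k 1) ≠ V'.valuation (k 3) := by
      rw [hv1, hv3]
      intro h
      exact hγ0s1 (mul_right_cancel₀ hγ0ne h).symm
    have d23 : V'.valuation (k 2) ≠ V'.valuation (k 3) := by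
      rw [hv2, hv3]; exact hγ1s1
    have hval : ∀ i i' : Fin 4, i ≠ 0 → i' ≠ 0 → i ≠ i' → k i ≠ 0 → k i' ≠ 0 →
        V'.valuation (k i) ≠ V'.valuation (k i') := by
      intro i i' hi0 hi'0 hii' _ _
      fin_cases i <;> fin_cases i' <;>
        first
          | exact absurd rfl hii'
          | exact absurd rfl hi0
          | exact absurd rfl hi'0
          | exact d12
          | exact d12.symm
          | exact d13
          | exact d13.symm
          | exact d23
          | exact d23.symm
    obtain ⟨c, hc, g₁, hid, hunit, hdist⟩ :=
      assemble V' V htot Z k hkV hex m hm00 hminj hval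
    refine ⟨jj, ?_, c, hc, g₁, ?_, hunit, hdist⟩
    · intro e
      fin_cases e
      · exact ⟨lt_of_le_of_lt (le_max_left _ _) hj0b, hj0l⟩
      · exact ⟨hj1b, hj1l⟩
    · -- the evaluation identity, with g = 0
      have hZ0 : δ0 * Z 0 = y 0 - w0 := by
        rw [hZ]
        show δ0 * ((y 0 - v 0 (jj 0)) / (v 0 (jj 0 + 1) - v 0 (jj 0))) = y 0 - w0
        rw [hjj0]
        exact mul_div_cancel₀ _ hδ0ne
      have hZ1 : δ1 * Z 1 = y 1 - w1 := by
        rw [hZ]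
        show δ1 * ((y 1 - v 1 (jj 1)) / (v 1 (jj 1 + 1) - v 1 (jj 1))) = y 1 - w1
        rw [hjj1]
        exact mul_div_cancel₀ _ hδ1ne
      have hsum : (∑ i : Fin 4, k i * ((m i).prod fun e n => Z e ^ n)) = 0 := by
        have hexpand : (∑ i : Fin 4, k i * ((m i).prod fun e n => Z e ^ n)) =
            (w0 + δ0 * Z 0) ^ 2 - (w1 + δ1 * Z 1) := by
          rw [Fin.sum_univ_four]
          rw [prod_pow_fin2, prod_pow_fin2, prod_pow_fin2, prod_pow_fin2]
          rw [hmv0 0, hmv1 0, hmv0 1, hmv1 1, hmv0 2, hmv1 2, hmv0 3, hmv1 3]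
          show (w0 ^ 2 - w1) * (Z 0 ^ 0 * Z 1 ^ 0) + 2 * w0 * δ0 * (Z 0 ^ 1 * Z 1 ^ 0) +
              -δ1 * (Z 0 ^ 0 * Z 1 ^ 1) + δ0 * δ0 * (Z 0 ^ 2 * Z 1 ^ 0) = _
          ring
        rw [hexpand, show w0 + δ0 * Z 0 = y 0 by rw [hZ0]; ring,
          show w1 + δ1 * Z 1 = y 1 by rw [hZ1]; ring, hy1, sub_self]
      rw [hg, MvPolynomial.eval₂_zero, ← hZ, hid, hsum]
  · -- case g ≠ 0
    set M : Fin 4 → (Fin 2 →₀ ℕ) :=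
      ![0, Finsupp.single 0 1, Finsupp.single 1 1, Finsupp.single 0 1 + Finsupp.single 1 1]
      with hM
    have hMv0 : ∀ i : Fin 4, M i 0 = ![0, 1, 0, 1] i := by
      intro i
      fin_cases i <;> simp [hM, Finsupp.single_apply]
    have hMv1 : ∀ i : Fin 4, M i 1 = ![0, 0, 1, 1] i := by
      intro i
      fin_cases i <;> simp [hM, Finsupp.single_apply]
    have hMinj : Function.Injective M := by
      have hcomp : (fun d : Fin 2 →₀ ℕ => (d 0, d 1)) ∘ M =
          fun i => (![0, 1, 0, 1] i, ![0, 0, 1, 1] i) := by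
        funext i
        show (M i 0, M i 1) = _
        rw [hMv0 i, hMv1 i]
      have h1 : Function.Injective ((fun d : Fin 2 →₀ ℕ => (d 0, d 1)) ∘ M) := by
        rw [hcomp]; decide
      exact h1.of_comp
    have hrep : g = ∑ i : Fin 4, monomial (M i) (g.coeff (M i)) :=
      rep g hdeg M hMinj rfl rfl rfl rfl
    set A : Fin 4 → K' := fun i => ((g.coeff (M i) : ↥V) : K') with hA
    have hAV : ∀ i, A i ∈ V := fun i => SetLike.coe_mem _
    have hAK : ∀ i, A i ∈ K := fun i => hVK (hAV i)
    -- tail-constant values for the two affine coefficient combinations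
    obtain ⟨bndC, hbndC, sC, hsC⟩ :=
      exists_tail_affine V' (lam 0) (hlam 0) (y 0) (v 0) (hpl 0) K (hnpl 0)
        (A 2) (A 3) (hAK 2) (hAK 3)
    obtain ⟨bndB, hbndB, sB, hsB⟩ :=
      exists_tail_affine V' (lam 1) (hlam 1) (y 1) (v 1) (hpl 1) K (hnpl 1)
        (A 1) (A 3) (hAK 1) (hAK 3)
    set sD : V'.ValueGroup := V'.valuation (A 3) with hsD
    obtain ⟨j0, hj0b, hj0l, hγ0s1, -⟩ :=
      exists_good_index V' (lam 0) (hlam 0) (y 0) (v 0) (hpl 0)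
        (max (ν 0) bndC) (max_lt (hν 0) hbndC) (sC * sD⁻¹) (sC * sD⁻¹)
    set γ0 : V'.ValueGroup := V'.valuation (y 0 - v 0 j0) with hγ0def
    obtain ⟨j1, hj1b, hj1l, hγ1s1, hγ1s2⟩ :=
      exists_good_index V' (lam 1) (hlam 1) (y 1) (v 1) (hpl 1)
        (max (ν 1) bndB) (max_lt (hν 1) hbndB) (sB * sD⁻¹) (sB * γ0 * sC⁻¹)
    set γ1 : V'.ValueGroup := V'.valuation (y 1 - v 1 j1) with hγ1def
    set jj : Fin 2 → Ordinal := ![j0, j1] with hjj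
    set Z : Fin 2 → K' :=
      (fun e => (y e - v e (jj e)) / (v e (jj e + 1) - v e (jj e))) with hZ
    have hjj0 : jj 0 = j0 := rfl
    have hjj1 : jj 1 = j1 := rfl
    set w0 : K' := v 0 j0 with hw0
    set w1 : K' := v 1 j1 with hw1
    set δ0 : K' := v 0 (j0 + 1) - v 0 j0 with hδ0
    set δ1 : K' := v 1 (j1 + 1) - v 1 j1 with hδ1
    have hδ0ne : δ0 ≠ 0 := hδne 0 j0 hj0l
    have hδ1ne : δ1 ≠ 0 := hδne 1 j1 hj1l
    set k : Fin 4 → K' :=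
      ![A 0 + A 1 * w0 + A 2 * w1 + A 3 * (w0 * w1),
        (A 1 + A 3 * w1) * δ0, (A 2 + A 3 * w0) * δ1, A 3 * (δ0 * δ1)] with hk
    set m : Fin 4 → (Fin 2 →₀ ℕ) := M with hmdef
    have hm00 : m 0 = 0 := rfl
    -- memberships
    have hw0V : w0 ∈ V := hvV 0 j0 hj0l
    have hw1V : w1 ∈ V := hvV 1 j1 hj1l
    have hδ0V : δ0 ∈ V := V.sub_mem (hvV 0 (j0 + 1) (hsucc 0 j0 hj0l)) hw0V
    have hδ1V : δ1 ∈ V := V.sub_mem (hvV 1 (j1 + 1) (hsucc 1 j1 hj1l)) hw1V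
    have hkV : ∀ i, k i ∈ V := by
      intro i
      fin_cases i
      · exact V.add_mem (V.add_mem (V.add_mem (hAV 0) (V.mul_mem (hAV 1) hw0V))
          (V.mul_mem (hAV 2) hw1V)) (V.mul_mem (hAV 3) (V.mul_mem hw0V hw1V))
      · exact V.mul_mem (V.add_mem (hAV 1) (V.mul_mem (hAV 3) hw1V)) hδ0V
      · exact V.mul_mem (V.add_mem (hAV 2) (V.mul_mem (hAV 3) hw0V)) hδ1V
      · exact V.mul_mem (hAV 3) (V.mul_mem hδ0V hδ1V)
    -- not all k are zero (otherwise g = 0)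
    have hex : ∃ i, k i ≠ 0 := by
      by_contra hno
      push_neg at hno
      apply hg
      have h3 : A 3 = 0 := by
        have := hno 3
        rw [hk] at this
        simp only [Matrix.cons_val_three, Matrix.head_fin_const, Matrix.head_cons] at this
        rcases mul_eq_zero.1 (by exact this) with h | h
        · exact h
        · exact absurd h (mul_ne_zero hδ0ne hδ1ne)
      have h1 : A 1 = 0 := by
        have := hno 1
        rw [hk] at this
        simp only [Matrix.cons_val_one, Matrix.head_cons] at this
        rcases mul_eq_zero.1 (by exact this) with h | h
        · rw [h3, zero_mul, add_zero] at h; exact h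
        · exact absurd h hδ0ne
      have h2 : A 2 = 0 := by
        have := hno 2
        rw [hk] at this
        simp only [Matrix.cons_val_two, Matrix.tail_cons, Matrix.head_cons] at this
        rcases mul_eq_zero.1 (by exact this) with h | h
        · rw [h3, zero_mul, add_zero] at h; exact h
        · exact absurd h hδ1ne
      have h0 : A 0 = 0 := by
        have := hno 0
        rw [hk] at this
        simp only [Matrix.cons_val_zero] at this
        rw [h1, h2, h3, zero_mul, zero_mul, zero_mul, add_zero, add_zero, add_zero] at this
        exact this
      have hcz : ∀ i, g.coeff (M i) = 0 := by
        intro i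
        have : ((g.coeff (M i) : ↥V) : K') = 0 := by
          fin_cases i
          exacts [h0, h1, h2, h3]
        exact Subtype.ext this
      rw [hrep]
      refine Finset.sum_eq_zero fun i _ => ?_
      rw [hcz i, map_zero]
    -- value computations
    have hγ0ne : γ0 ≠ 0 := hγ0 0 j0 hj0l
    have hγ1ne : γ1 ≠ 0 := hγ0 1 j1 hj1l
    have hv1 : V'.valuation (k 1) = sB * γ0 := by
      show V'.valuation ((A 1 + A 3 * w1) * δ0) = sB * γ0
      rw [map_mul, hsB j1 (lt_of_le_of_lt (le_max_right _ _) hj1b) hj1l, hδval 0 j0 hj0l]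
    have hv2 : V'.valuation (k 2) = sC * γ1 := by
      show V'.valuation ((A 2 + A 3 * w0) * δ1) = sC * γ1
      rw [map_mul, hsC j0 (lt_of_le_of_lt (le_max_right _ _) hj0b) hj0l, hδval 1 j1 hj1l]
    have hv3 : V'.valuation (k 3) = sD * (γ0 * γ1) := by
      show V'.valuation (A 3 * (δ0 * δ1)) = sD * (γ0 * γ1)
      rw [map_mul, map_mul, hδval 0 j0 hj0l, hδval 1 j1 hj1l, hsD]
    have d12 : k 1 ≠ 0 → k 2 ≠ 0 → V'.valuation (k 1) ≠ V'.valuation (k 2) := by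
      intro hk1 hk2 hEq
      rw [hv1, hv2] at hEq
      have hsCne : sC ≠ 0 := by
        intro h
        apply V'.valuation.ne_zero_iff.2 hk2
        rw [hv2, h, zero_mul]
      apply hγ1s2
      rw [hEq, mul_comm sC γ1, mul_assoc, mul_inv_cancel₀ hsCne, mul_one]
    have d13 : k 1 ≠ 0 → k 3 ≠ 0 → V'.valuation (k 1) ≠ V'.valuation (k 3) := by
      intro hk1 hk3 hEq
      rw [hv1, hv3] at hEq
      have hsDne : sD ≠ 0 := by
        intro h
        apply V'.valuation.ne_zero_iff.2 hk3
        rw [hv3, h, zero_mul]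
      apply hγ1s1
      have hEq' : sB * γ0 = sD * γ1 * γ0 := by
        rw [hEq, mul_comm γ0 γ1, ← mul_assoc]
      have : sB = sD * γ1 := mul_right_cancel₀ hγ0ne hEq'
      rw [this, mul_comm sD γ1, mul_assoc, mul_inv_cancel₀ hsDne, mul_one]
    have d23 : k 2 ≠ 0 → k 3 ≠ 0 → V'.valuation (k 2) ≠ V'.valuation (k 3) := by
      intro hk2 hk3 hEq
      rw [hv2, hv3] at hEq
      have hsDne : sD ≠ 0 := by
        intro h
        apply V'.valuation.ne_zero_iff.2 hk3
        rw [hv3, h, zero_mul]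
      apply hγ0s1
      have hEq' : sC * γ1 = sD * γ0 * γ1 := by
        rw [hEq, ← mul_assoc]
      have : sC = sD * γ0 := mul_right_cancel₀ hγ1ne hEq'
      rw [this, mul_comm sD γ0, mul_assoc, mul_inv_cancel₀ hsDne, mul_one]
    have hval : ∀ i i' : Fin 4, i ≠ 0 → i' ≠ 0 → i ≠ i' → k i ≠ 0 → k i' ≠ 0 →
        V'.valuation (k i) ≠ V'.valuation (k i') := by
      intro i i' hi0 hi'0 hii' hki hki'
      fin_cases i <;> fin_cases i' <;>
        first
          | exact absurd rfl hii'
          | exact absurd rfl hi0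
          | exact absurd rfl hi'0
          | exact d12 hki hki'
          | exact (d12 hki' hki).symm
          | exact d13 hki hki'
          | exact (d13 hki' hki).symm
          | exact d23 hki hki'
          | exact (d23 hki' hki).symm
    obtain ⟨c, hc, g₁, hid, hunit, hdist⟩ :=
      assemble V' V htot Z k hkV hex m hm00 hMinj hval
    refine ⟨jj, ?_, c, hc, g₁, ?_, hunit, hdist⟩
    · intro e
      fin_cases e
      · exact ⟨lt_of_le_of_lt (le_max_left _ _) hj0b, hj0l⟩
      · exact ⟨lt_of_le_of_lt (le_max_left _ _) hj1b, hj1l⟩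
    · -- the evaluation identity
      have hZ0 : δ0 * Z 0 = y 0 - w0 := by
        rw [hZ]
        show δ0 * ((y 0 - v 0 (jj 0)) / (v 0 (jj 0 + 1) - v 0 (jj 0))) = y 0 - w0
        rw [hjj0]
        exact mul_div_cancel₀ _ hδ0ne
      have hZ1 : δ1 * Z 1 = y 1 - w1 := by
        rw [hZ]
        show δ1 * ((y 1 - v 1 (jj 1)) / (v 1 (jj 1 + 1) - v 1 (jj 1))) = y 1 - w1
        rw [hjj1]
        exact mul_div_cancel₀ _ hδ1ne
      have hy0eq : y 0 = w0 + δ0 * Z 0 := by rw [hZ0]; ring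
      have hy1eq : y 1 = w1 + δ1 * Z 1 := by rw [hZ1]; ring
      have hLHS : MvPolynomial.eval₂ V.subtype y g =
          ∑ i : Fin 4, k i * ((m i).prod fun e n => Z e ^ n) := by
        conv_lhs => rw [hrep]
        rw [MvPolynomial.eval₂_sum]
        have hterm : ∀ i : Fin 4,
            MvPolynomial.eval₂ V.subtype y (monomial (M i) (g.coeff (M i))) =
              A i * (y 0 ^ (M i 0) * y 1 ^ (M i 1)) := by
          intro i
          rw [MvPolynomial.eval₂_monomial, prod_pow_fin2]
          rfl
        rw [Fin.sum_univ_four, Fin.sum_univ_four, hterm 0, hterm 1, hterm 2, hterm 3]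
        rw [prod_pow_fin2, prod_pow_fin2, prod_pow_fin2, prod_pow_fin2]
        rw [show m 0 = M 0 from rfl, show m 1 = M 1 from rfl, show m 2 = M 2 from rfl,
          show m 3 = M 3 from rfl]
        rw [hMv0 0, hMv1 0, hMv0 1, hMv1 1, hMv0 2, hMv1 2, hMv0 3, hMv1 3]
        show A 0 * (y 0 ^ 0 * y 1 ^ 0) + A 1 * (y 0 ^ 1 * y 1 ^ 0) +
            A 2 * (y 0 ^ 0 * y 1 ^ 1) + A 3 * (y 0 ^ 1 * y 1 ^ 1) =
          (A 0 + A 1 * w0 + A 2 * w1 + A 3 * (w0 * w1)) * (Z 0 ^ 0 * Z 1 ^ 0) +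
            (A 1 + A 3 * w1) * δ0 * (Z 0 ^ 1 * Z 1 ^ 0) +
            (A 2 + A 3 * w0) * δ1 * (Z 0 ^ 0 * Z 1 ^ 1) +
            A 3 * (δ0 * δ1) * (Z 0 ^ 1 * Z 1 ^ 1)
        rw [hy0eq, hy1eq]
        ring
      rw [hLHS, ← hZ, hid]
end
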